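/- Let d ≥ 1 be an integer, R > 0, and let K : [0,∞) → ℝ be a bounded, nonnegative, measurable function supported in [0,R]. For j ≥ 1 set m_{K,j} := ∫₀^R s^{j−1} K(s) ds and assume m_{K,d} > 0; define the kernel moment ratios B_p := m_{K,d+p}/m_{K,d}. Let f₁ : ℝ^d → ℝ be a nonnegative integrable function, continuously differentiable in a neighborhood of 0, with f₁(0) > 0. Then, as p → 0⁺, the weighted mean fourth-power distance (∫_{ℝ^d} ‖ω‖⁴ K(‖ω‖/p) f₁(ω) dω) / (∫_{ℝ^d} K(‖ω‖/p) f₁(ω) dω) equals B₄ p⁴ + O(p⁵). -/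

import Mathlib

open MeasureTheory Filter Topology Asymptotics Set Metric

lemma aux_int (d j : ℕ) {R p : ℝ} (M : ℝ) (hR : 0 < R) (hp : 0 < p)
    (K : ℝ → ℝ) (hKmeas : Measurable K) (hKnonneg : ∀ s, 0 ≤ K s)
    (hKbdd : ∀ s, K s ≤ M) (hKsupp : ∀ s, R < s → K s = 0) :
    Integrable (fun ω : EuclideanSpace ℝ (Fin d) => ‖ω‖ ^ j * K (‖ω‖ / p)) := by
  have hmeas : Measurable fun ω : EuclideanSpace ℝ (Fin d) => ‖ω‖ ^ j * K (‖ω‖ / p) :=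
    (measurable_norm.pow_const j).mul (hKmeas.comp (measurable_norm.div_const p))
  have hsupp : Function.support (fun ω : EuclideanSpace ℝ (Fin d) => ‖ω‖ ^ j * K (‖ω‖ / p))
      ⊆ Metric.closedBall 0 (p * R) := by
    intro ω hω
    simp only [Function.mem_support, ne_eq] at hω
    have hK : K (‖ω‖ / p) ≠ 0 := fun h => hω (by simp [h])
    have : ‖ω‖ / p ≤ R := by
      by_contra h
      exact hK (hKsupp _ (lt_of_not_ge h))
    have : ‖ω‖ ≤ p * R := by
      rw [div_le_iff₀ hp] at this; linarith [this]
    simpa [Metric.mem_closedBall, dist_zero_right] using this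
  rw [← integrableOn_iff_integrable_of_support_subset hsupp]
  apply Measure.integrableOn_of_bounded (M := (p * R) ^ j * M)
  · exact (measure_closedBall_lt_top).ne
  · exact hmeas.aestronglyMeasurable
  · refine ae_restrict_of_forall_mem measurableSet_closedBall fun ω hω => ?_
    have hωle : ‖ω‖ ≤ p * R := by simpa [dist_zero_right] using hω
    have h1 : ‖ω‖ ^ j ≤ (p * R) ^ j := pow_le_pow_left₀ (norm_nonneg _) hωle j
    have h2 : 0 ≤ ‖ω‖ ^ j * K (‖ω‖ / p) :=
      mul_nonneg (by positivity) (hKnonneg _)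
    rw [Real.norm_of_nonneg h2]
    exact mul_le_mul h1 (hKbdd _) (hKnonneg _) (by positivity)

lemma aux_val (d j : ℕ) (hd : 1 ≤ d) {R p : ℝ} (hR : 0 < R) (hp : 0 < p)
    (K : ℝ → ℝ) (hKsupp : ∀ s, R < s → K s = 0) :
    ∫ ω : EuclideanSpace ℝ (Fin d), ‖ω‖ ^ j * K (‖ω‖ / p)
      = ((d : ℝ) * (volume (Metric.ball (0 : EuclideanSpace ℝ (Fin d)) 1)).toReal
          * ∫ s in (0:ℝ)..R, s ^ (d + j - 1) * K s) * p ^ (d + j) := by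
  haveI : Nontrivial (EuclideanSpace ℝ (Fin d)) := by
    apply Module.nontrivial_of_finrank_pos (R := ℝ) (by rw [finrank_euclideanSpace_fin]; omega)
  have hdim : Module.finrank ℝ (EuclideanSpace ℝ (Fin d)) = d := finrank_euclideanSpace_fin
  have h1 := integral_fun_norm_addHaar (volume : Measure (EuclideanSpace ℝ (Fin d)))
    (fun r : ℝ => r ^ j * K (r / p))
  rw [hdim] at h1
  rw [h1]
  -- change of variables in the Ioi integral
  have h2 := integral_comp_mul_left_Ioi
    (fun y : ℝ => y ^ (d - 1) • (y ^ j * K (y / p))) 0 hp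
  rw [mul_zero, smul_eq_mul] at h2
  have h3 : (fun x : ℝ => (p * x) ^ (d - 1) • ((p * x) ^ j * K (p * x / p)))
      = fun x : ℝ => (p ^ (d - 1) * p ^ j) * (x ^ (d + j - 1) * K x) := by
    funext x
    rw [smul_eq_mul, mul_div_cancel_left₀ _ hp.ne', mul_pow, mul_pow]
    have : d + j - 1 = (d - 1) + j := by omega
    rw [this, pow_add]; ring
  rw [h3] at h2
  rw [MeasureTheory.integral_const_mul] at h2
  beta_reduce at h2
  have h4 : ∫ y in Ioi (0:ℝ), y ^ (d - 1) • (y ^ j * K (y / p))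
      = p * (p ^ (d - 1) * p ^ j * ∫ x in Ioi (0:ℝ), x ^ (d + j - 1) * K x) := by
    rw [h2, ← mul_assoc, mul_inv_cancel₀ hp.ne', one_mul]
  rw [h4]
  have h5 : ∫ x in Ioi (0:ℝ), x ^ (d + j - 1) * K x
      = ∫ s in (0:ℝ)..R, s ^ (d + j - 1) * K s := by
    rw [intervalIntegral.integral_of_le hR.le]
    exact setIntegral_eq_of_subset_of_forall_diff_eq_zero measurableSet_Ioi
      Ioc_subset_Ioi_self (fun x hx => by
        have : R < x := by
          rcases hx with ⟨hx1, hx2⟩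
          simp only [mem_Ioc, not_and, not_le] at hx2
          exact hx2 hx1
        simp [hKsupp x this])
  rw [h5]
  have hppow : p * (p ^ (d - 1) * p ^ j) = p ^ (d + j) := by
    rw [← pow_add, ← pow_succ']
    congr 1; omega
  rw [nsmul_eq_mul, smul_eq_mul, ← hppow, measureReal_def]
  ring

/-- Step–bandwidth relation for the generalized curvature: the kernel-weighted mean
fourth-power pair distance equals `B₄ p⁴ + O(p⁵)` as the aspect ratio `p → 0⁺`. -/
theorem stmt_4 (d : ℕ) (hd : 1 ≤ d) (R : ℝ) (hR : 0 < R)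
    (K : ℝ → ℝ) (hKmeas : Measurable K) (hKnonneg : ∀ s, 0 ≤ K s)
    (hKbdd : ∃ M, ∀ s, K s ≤ M)
    (hKsupp : ∀ s, R < s → K s = 0)
    (mK : ℕ → ℝ) (hmK : ∀ j, mK j = ∫ s in (0:ℝ)..R, s ^ (j - 1) * K s)
    (hmKd : 0 < mK d)
    (B : ℕ → ℝ) (hB : ∀ p, B p = mK (d + p) / mK d)
    (f₁ : EuclideanSpace ℝ (Fin d) → ℝ) (hf₁int : Integrable f₁)
    (hf₁nonneg : ∀ x, 0 ≤ f₁ x) (hf₁pos : 0 < f₁ 0)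
    (hf₁smooth : ∃ ε > 0,
      ContDiffOn ℝ 1 f₁ (Metric.ball (0 : EuclideanSpace ℝ (Fin d)) ε)) :
    (fun p : ℝ =>
        (∫ ω : EuclideanSpace ℝ (Fin d), ‖ω‖ ^ 4 * K (‖ω‖ / p) * f₁ ω) /
          (∫ ω : EuclideanSpace ℝ (Fin d), K (‖ω‖ / p) * f₁ ω)
          - B 4 * p ^ 4)
      =O[𝓝[>] (0 : ℝ)] fun p => p ^ 5 := by
  obtain ⟨M, hM⟩ := hKbdd
  obtain ⟨ε, hε, hsmooth⟩ := hf₁smooth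
  -- local Lipschitz bound near 0
  have hCD : ContDiffAt ℝ 1 f₁ 0 := hsmooth.contDiffAt (Metric.ball_mem_nhds 0 hε)
  obtain ⟨Lip, t, ht, hlip⟩ := hCD.exists_lipschitzOnWith
  obtain ⟨δ, hδ, hδt⟩ := Metric.mem_nhds_iff.1 ht
  set δ' : ℝ := δ / 2 with hδ'def
  have hδ' : 0 < δ' := by positivity
  set L : ℝ := (Lip : ℝ) with hLdef
  have hL : 0 ≤ L := Lip.coe_nonneg
  set V : ℝ := (volume (Metric.ball (0 : EuclideanSpace ℝ (Fin d)) 1)).toReal with hVdef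
  set A : ℕ → ℝ := fun j => (d : ℝ) * V * mK (d + j) with hAdef
  -- the radial integral values
  have key : ∀ (j : ℕ) (p : ℝ), 0 < p →
      ∫ ω : EuclideanSpace ℝ (Fin d), ‖ω‖ ^ j * K (‖ω‖ / p) = A j * p ^ (d + j) := by
    intro j p hp
    rw [aux_val d j hd hR hp K hKsupp, ← hmK (d + j)]
  have hV : 0 < V := by
    rw [hVdef]
    refine ENNReal.toReal_pos (Metric.measure_ball_pos volume 0 one_pos).ne' measure_ball_lt_top.ne
  have hmKnn : ∀ j, 0 ≤ mK j := by
    intro j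
    rw [hmK j]
    refine intervalIntegral.integral_nonneg hR.le fun u hu => ?_
    exact mul_nonneg (pow_nonneg hu.1 _) (hKnonneg _)
  have hAnn : ∀ j, 0 ≤ A j := fun j =>
    mul_nonneg (mul_nonneg (by positivity) hV.le) (hmKnn _)
  have hA0 : 0 < A 0 := by
    simp only [hAdef, Nat.add_zero]
    exact mul_pos (mul_pos (by exact_mod_cast hd : (0:ℝ) < d) hV) hmKd
  have hB4nn : 0 ≤ B 4 := by rw [hB]; exact div_nonneg (hmKnn _) hmKd.le
  have hB4A : B 4 * A 0 = A 4 := by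
    rw [hB]
    simp only [hAdef, Nat.add_zero]
    field_simp
  -- error estimates
  have err : ∀ (j : ℕ) (p : ℝ), 0 < p → p * R ≤ δ' →
      |(∫ ω : EuclideanSpace ℝ (Fin d), ‖ω‖ ^ j * K (‖ω‖ / p) * f₁ ω)
        - f₁ 0 * (A j * p ^ (d + j))| ≤ L * (A (j + 1) * p ^ (d + (j + 1))) := by
    intro j p hp hpR
    have hint1 := aux_int d j M hR hp K hKmeas hKnonneg hM hKsupp
    have hint1' := aux_int d (j + 1) M hR hp K hKmeas hKnonneg hM hKsupp
    have hint2 : Integrable (fun ω : EuclideanSpace ℝ (Fin d) =>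
        ‖ω‖ ^ j * K (‖ω‖ / p) * f₁ ω) := by
      refine (hf₁int.const_mul ((p * R) ^ j * M)).mono ?_ (ae_of_all _ fun ω => ?_)
      · exact (((measurable_norm.pow_const j).mul
          (hKmeas.comp (measurable_norm.div_const p))).aemeasurable.aestronglyMeasurable).mul
          hf₁int.aestronglyMeasurable
      · by_cases hK0 : K (‖ω‖ / p) = 0
        · simp only [hK0, mul_zero, zero_mul, norm_zero]
          positivity
        · have hle : ‖ω‖ ≤ p * R := by
            by_contra h
            push_neg at h
            exact hK0 (hKsupp _ ((lt_div_iff₀ hp).2 (by linarith)))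
          have hMnn : 0 ≤ M := (hKnonneg 0).trans (hM 0)
          have h1 : ‖ω‖ ^ j * K (‖ω‖ / p) * f₁ ω ≤ (p * R) ^ j * M * f₁ ω := by
            refine mul_le_mul ?_ le_rfl (hf₁nonneg _) (by positivity)
            exact mul_le_mul (pow_le_pow_left₀ (norm_nonneg _) hle j) (hM _)
              (hKnonneg _) (by positivity)
          have h2 : 0 ≤ ‖ω‖ ^ j * K (‖ω‖ / p) * f₁ ω :=
            mul_nonneg (mul_nonneg (by positivity) (hKnonneg _)) (hf₁nonneg _)
          rw [Real.norm_of_nonneg h2]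
          exact h1.trans (le_abs_self _)
    rw [← key j p hp]
    have hsplit : (∫ ω : EuclideanSpace ℝ (Fin d), ‖ω‖ ^ j * K (‖ω‖ / p) * f₁ ω)
        - f₁ 0 * (∫ ω : EuclideanSpace ℝ (Fin d), ‖ω‖ ^ j * K (‖ω‖ / p))
        = ∫ ω : EuclideanSpace ℝ (Fin d), ‖ω‖ ^ j * K (‖ω‖ / p) * (f₁ ω - f₁ 0) := by
      simp_rw [mul_sub]
      rw [MeasureTheory.integral_sub hint2 (hint1.mul_const (f₁ 0)),
        MeasureTheory.integral_mul_const]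
      ring
    rw [hsplit, ← Real.norm_eq_abs]
    have hbd : ∀ ω : EuclideanSpace ℝ (Fin d),
        ‖‖ω‖ ^ j * K (‖ω‖ / p) * (f₁ ω - f₁ 0)‖
          ≤ L * (‖ω‖ ^ (j + 1) * K (‖ω‖ / p)) := by
      intro ω
      by_cases hK0 : K (‖ω‖ / p) = 0
      · simp only [hK0, mul_zero, zero_mul, norm_zero]
        positivity
      · have hle : ‖ω‖ ≤ p * R := by
          by_contra h
          push_neg at h
          exact hK0 (hKsupp _ ((lt_div_iff₀ hp).2 (by linarith)))
        have hωt : ω ∈ t := hδt (by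
          rw [mem_ball_zero_iff]
          calc ‖ω‖ ≤ p * R := hle
            _ ≤ δ' := hpR
            _ < δ := by rw [hδ'def]; linarith)
        have h0t : (0 : EuclideanSpace ℝ (Fin d)) ∈ t := hδt (mem_ball_self hδ)
        have hdist : |f₁ ω - f₁ 0| ≤ L * ‖ω‖ := by
          have := hlip.dist_le_mul ω hωt 0 h0t
          rwa [Real.dist_eq, dist_zero_right] at this
        have hg0 : 0 ≤ ‖ω‖ ^ j * K (‖ω‖ / p) :=
          mul_nonneg (by positivity) (hKnonneg _)
        calc ‖‖ω‖ ^ j * K (‖ω‖ / p) * (f₁ ω - f₁ 0)‖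
            = (‖ω‖ ^ j * K (‖ω‖ / p)) * |f₁ ω - f₁ 0| := by
              rw [norm_mul, Real.norm_of_nonneg hg0, Real.norm_eq_abs]
          _ ≤ (‖ω‖ ^ j * K (‖ω‖ / p)) * (L * ‖ω‖) :=
              mul_le_mul_of_nonneg_left hdist hg0
          _ = L * (‖ω‖ ^ (j + 1) * K (‖ω‖ / p)) := by rw [pow_succ]; ring
    calc ‖∫ ω : EuclideanSpace ℝ (Fin d), ‖ω‖ ^ j * K (‖ω‖ / p) * (f₁ ω - f₁ 0)‖
        ≤ ∫ ω : EuclideanSpace ℝ (Fin d), L * (‖ω‖ ^ (j + 1) * K (‖ω‖ / p)) :=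
          norm_integral_le_of_norm_le (hint1'.const_mul L) (ae_of_all _ hbd)
      _ = L * (A (j + 1) * p ^ (d + (j + 1))) := by
          rw [MeasureTheory.integral_const_mul, key (j + 1) p hp]
  -- main assembly
  rw [Asymptotics.isBigO_iff]
  refine ⟨2 * (L * A 5 + B 4 * (L * A 1)) / (f₁ 0 * A 0), ?_⟩
  have hp₀1 : 0 < δ' / R := by positivity
  have hp₀2 : 0 < (A 0 * f₁ 0) / (2 * (L * A 1) + 1) := by
    apply div_pos (mul_pos hA0 hf₁pos)
    have := mul_nonneg hL (hAnn 1); linarith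
  filter_upwards [Ioo_mem_nhdsGT_of_mem
    (Set.mem_Ico.2 ⟨le_refl (0:ℝ), lt_min hp₀1 hp₀2⟩)] with p hpmem
  obtain ⟨hp, hpp⟩ := hpmem
  have hpR : p * R ≤ δ' := by
    have h1 : p ≤ δ' / R := (hpp.trans_le (min_le_left _ _)).le
    calc p * R ≤ (δ' / R) * R := by nlinarith
      _ = δ' := by field_simp
  have hpA : 2 * (L * A 1) * p ≤ A 0 * f₁ 0 := by
    have h1 : p ≤ (A 0 * f₁ 0) / (2 * (L * A 1) + 1) := (hpp.trans_le (min_le_right _ _)).le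
    have hpos : (0:ℝ) < 2 * (L * A 1) + 1 := by
      have := mul_nonneg hL (hAnn 1); linarith
    rw [le_div_iff₀ hpos] at h1
    nlinarith
  have hN := err 4 p hp hpR
  have hD := err 0 p hp hpR
  norm_num at hN hD
  set N : ℝ := ∫ ω : EuclideanSpace ℝ (Fin d), ‖ω‖ ^ 4 * K (‖ω‖ / p) * f₁ ω with hNdef
  set D : ℝ := ∫ ω : EuclideanSpace ℝ (Fin d), K (‖ω‖ / p) * f₁ ω with hDdef
  rw [pow_succ] at hD
  have hDlow : f₁ 0 * (A 0 * p ^ d) / 2 ≤ D := by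
    have h1 := (abs_le.1 hD).1
    have h2 : L * (A 1 * (p ^ d * p)) ≤ f₁ 0 * (A 0 * p ^ d) / 2 := by
      nlinarith [mul_le_mul_of_nonneg_left hpA (le_of_lt (pow_pos hp d))]
    linarith
  have hDpos : 0 < D :=
    lt_of_lt_of_le (div_pos (mul_pos hf₁pos (mul_pos hA0 (pow_pos hp d))) two_pos) hDlow
  have hNum : |N - B 4 * p ^ 4 * D| ≤ (L * A 5 + B 4 * (L * A 1)) * (p ^ d * p ^ 5) := by
    have e1 : f₁ 0 * (A 4 * p ^ (d + 4)) = B 4 * p ^ 4 * (f₁ 0 * (A 0 * p ^ d)) := by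
      rw [← hB4A, pow_add]; ring
    calc |N - B 4 * p ^ 4 * D|
        = |(N - f₁ 0 * (A 4 * p ^ (d + 4)))
            + B 4 * p ^ 4 * (f₁ 0 * (A 0 * p ^ d) - D)| := by rw [e1]; congr 1; ring
      _ ≤ |N - f₁ 0 * (A 4 * p ^ (d + 4))|
            + |B 4 * p ^ 4| * |f₁ 0 * (A 0 * p ^ d) - D| := by
          refine (abs_add_le _ _).trans ?_
          rw [abs_mul]
      _ ≤ L * (A 5 * p ^ (d + 5)) + B 4 * p ^ 4 * (L * (A 1 * (p ^ d * p))) := by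
          refine add_le_add hN ?_
          have hb : |B 4 * p ^ 4| = B 4 * p ^ 4 := abs_of_nonneg (by positivity)
          rw [hb, abs_sub_comm]
          exact mul_le_mul_of_nonneg_left hD (by positivity)
      _ = (L * A 5 + B 4 * (L * A 1)) * (p ^ d * p ^ 5) := by
          rw [pow_add]; ring
  have hgoal : N / D - B 4 * p ^ 4 = (N - B 4 * p ^ 4 * D) / D := by
    field_simp
  rw [hgoal, Real.norm_eq_abs, Real.norm_eq_abs, abs_div, abs_of_pos hDpos,
    abs_of_pos (pow_pos hp 5)]
  calc |N - B 4 * p ^ 4 * D| / D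
      ≤ ((L * A 5 + B 4 * (L * A 1)) * (p ^ d * p ^ 5))
          / (f₁ 0 * (A 0 * p ^ d) / 2) :=
        div_le_div₀ (mul_nonneg (add_nonneg (mul_nonneg hL (hAnn 5))
            (mul_nonneg hB4nn (mul_nonneg hL (hAnn 1)))) (by positivity)) hNum
          (div_pos (mul_pos hf₁pos (mul_pos hA0 (pow_pos hp d))) two_pos) hDlow
    _ = 2 * (L * A 5 + B 4 * (L * A 1)) / (f₁ 0 * A 0) * p ^ 5 := by
        have h1 : f₁ 0 ≠ 0 := hf₁pos.ne'
        have h2 : A 0 ≠ 0 := hA0.ne'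
        have h3 : p ^ d ≠ 0 := (pow_pos hp d).ne'
        field_simp
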